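/- The softmax function is 1-Lipschitz-sensitive in the following sense: for Q₁, Q₂ : A → ℝ on a finite set A with β = 1, each coordinate of the softmax satisfies |softmax(Q₁)(a) − softmax(Q₂)(a)| ≤ 2·max_{a'} |Q₁(a') − Q₂(a')|. -/
import Mathlib


open Finset

lemma softmax_one_side {A : Type} [Fintype A] [Nonempty A]
    (Q₁ Q₂ : A → ℝ) (M : ℝ) (hM : ∀ a, |Q₁ a - Q₂ a| ≤ M) (a : A) :
    Real.exp (Q₁ a) / (∑ a', Real.exp (Q₁ a')) -
      Real.exp (Q₂ a) / (∑ a', Real.exp (Q₂ a')) ≤ 2 * M := by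
  set S₁ := ∑ a', Real.exp (Q₁ a') with hS₁
  set S₂ := ∑ a', Real.exp (Q₂ a') with hS₂
  have hS₁pos : 0 < S₁ := Finset.sum_pos (fun i _ => Real.exp_pos _) univ_nonempty
  have hS₂pos : 0 < S₂ := Finset.sum_pos (fun i _ => Real.exp_pos _) univ_nonempty
  have hMnn : 0 ≤ M := le_trans (abs_nonneg _) (hM a)
  -- numerator bound
  have hnum : Real.exp (-M) * Real.exp (Q₁ a) ≤ Real.exp (Q₂ a) := by
    rw [← Real.exp_add]
    apply Real.exp_le_exp.2
    have := (abs_le.1 (hM a)).2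
    linarith
  -- denominator bound
  have hden : S₂ ≤ Real.exp M * S₁ := by
    rw [hS₂, hS₁, Finset.mul_sum]
    apply Finset.sum_le_sum
    intro i _
    rw [← Real.exp_add]
    apply Real.exp_le_exp.2
    have := (abs_le.1 (hM i)).1
    linarith
  have hp₁le : Real.exp (Q₁ a) / S₁ ≤ 1 := by
    rw [div_le_one hS₁pos]
    exact Finset.single_le_sum (f := fun i => Real.exp (Q₁ i))
      (fun i _ => (Real.exp_pos _).le) (mem_univ a)
  have hkey : Real.exp (-(2*M)) * (Real.exp (Q₁ a) / S₁) ≤ Real.exp (Q₂ a) / S₂ := by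
    rw [mul_div_assoc', div_le_div_iff₀ hS₁pos hS₂pos]
    have hme : Real.exp (-(2*M)) * Real.exp M = Real.exp (-M) := by
      rw [← Real.exp_add]; ring_nf
    calc Real.exp (-(2*M)) * Real.exp (Q₁ a) * S₂
        ≤ Real.exp (-(2*M)) * Real.exp (Q₁ a) * (Real.exp M * S₁) := by
          apply mul_le_mul_of_nonneg_left hden; positivity
      _ = (Real.exp (-(2*M)) * Real.exp M) * Real.exp (Q₁ a) * S₁ := by ring
      _ = Real.exp (-M) * Real.exp (Q₁ a) * S₁ := by rw [hme]
      _ ≤ Real.exp (Q₂ a) * S₁ := mul_le_mul_of_nonneg_right hnum hS₁pos.le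
  have hexp : 1 - 2 * M ≤ Real.exp (-(2*M)) := by
    have := Real.add_one_le_exp (-(2*M))
    linarith
  have hp₁nn : 0 ≤ Real.exp (Q₁ a) / S₁ := by positivity
  calc Real.exp (Q₁ a) / S₁ - Real.exp (Q₂ a) / S₂
      ≤ Real.exp (Q₁ a) / S₁ - Real.exp (-(2*M)) * (Real.exp (Q₁ a) / S₁) := by
        linarith
    _ = (1 - Real.exp (-(2*M))) * (Real.exp (Q₁ a) / S₁) := by ring
    _ ≤ (1 - Real.exp (-(2*M))) * 1 := by
        apply mul_le_mul_of_nonneg_left hp₁le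
        have := Real.exp_le_one_iff.2 (by linarith : -(2*M) ≤ 0)
        linarith
    _ ≤ 2 * M := by linarith

/-- Softmax sensitivity: for `Q₁, Q₂ : A → ℝ` on a nonempty finite set `A`
(with inverse temperature `β = 1`), each coordinate of the softmax satisfies
`|softmax Q₁ a - softmax Q₂ a| ≤ 2 * max_{a'} |Q₁ a' - Q₂ a'|`. -/
theorem softmax_sensitivity {A : Type} [Fintype A] [Nonempty A]
    (Q₁ Q₂ : A → ℝ) :
    ∀ a : A,
      |Real.exp (Q₁ a) / (∑ a', Real.exp (Q₁ a')) -
          Real.exp (Q₂ a) / (∑ a', Real.exp (Q₂ a'))| ≤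
        2 * Finset.univ.sup' Finset.univ_nonempty
          (fun a' => |Q₁ a' - Q₂ a'|) := by
  intro a
  set M := Finset.univ.sup' Finset.univ_nonempty (fun a' => |Q₁ a' - Q₂ a'|) with hMdef
  have hM₁ : ∀ a', |Q₁ a' - Q₂ a'| ≤ M := fun a' =>
    Finset.le_sup' (fun a' => |Q₁ a' - Q₂ a'|) (mem_univ a')
  have hM₂ : ∀ a', |Q₂ a' - Q₁ a'| ≤ M := fun a' => by
    rw [abs_sub_comm]; exact hM₁ a'
  rw [abs_sub_le_iff]
  exact ⟨softmax_one_side Q₁ Q₂ M hM₁ a, softmax_one_side Q₂ Q₁ M hM₂ a⟩
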